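/- In the ring of noncommutative formal power series C<<X,Y>>, there exists a unique element C with zero constant term satisfying C = X(1-C)^{-1}Y, and it equals the sum over all 'irreducible bracketings': C = XY + XXYY + XXYXYY + XXXYYY + ... (the sum over balanced words in X,Y, with X as open and Y as close parenthesis, that are irreducible, i.e. proper prefix sums are positive). -/

import Mathlib

/-- The algebra `ℂ⟪X,Y⟫` of noncommutative formal power series in two variables,
realized as arbitrary functions on the free monoid of words in the alphabet `Fin 2`
(`0 = X`, `1 = Y`), with convolution product. -/
def NCS : Type := List (Fin 2) → ℂ

namespace NCS

instance : AddCommGroup NCS := inferInstanceAs (AddCommGroup (List (Fin 2) → ℂ))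

instance : One NCS := ⟨fun w => if w = [] then 1 else 0⟩

noncomputable instance : Mul NCS :=
  ⟨fun f g w => ∑ i ∈ Finset.range (w.length + 1), f (w.take i) * g (w.drop i)⟩

lemma mul_apply (f g : NCS) (w : List (Fin 2)) :
    (f * g) w = ∑ i ∈ Finset.range (w.length + 1), f (w.take i) * g (w.drop i) := rfl

lemma add_apply (f g : NCS) (w : List (Fin 2)) : (f + g) w = f w + g w := rfl
lemma zero_apply (w : List (Fin 2)) : (0 : NCS) w = 0 := rfl
lemma one_apply (w : List (Fin 2)) : (1 : NCS) w = if w = [] then 1 else 0 := rfl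

noncomputable instance : Ring NCS where
  __ := (inferInstance : AddCommGroup NCS)
  __ := (inferInstance : One NCS)
  __ := (inferInstance : Mul NCS)
  left_distrib f g h := by
    funext w
    simp [mul_apply, add_apply, mul_add, Finset.sum_add_distrib]
  right_distrib f g h := by
    funext w
    simp [mul_apply, add_apply, add_mul, Finset.sum_add_distrib]
  zero_mul f := by funext w; simp [mul_apply, zero_apply]
  mul_zero f := by funext w; simp [mul_apply, zero_apply]
  one_mul f := by
    funext w
    rw [mul_apply, Finset.sum_eq_single 0]
    · simp [one_apply]
    · intro i hi hne
      rw [one_apply, if_neg, zero_mul]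
      intro h
      rcases List.take_eq_nil_iff.mp h with h1 | h1
      · exact hne h1
      · simp [h1, Finset.mem_range] at hi
        exact hne (by omega)
    · intro h; simp at h
  mul_one f := by
    funext w
    rw [mul_apply, Finset.sum_eq_single w.length]
    · simp [one_apply]
    · intro i hi hne
      rw [one_apply, if_neg, mul_zero]
      intro h
      have := List.drop_eq_nil_iff.mp h
      simp [Finset.mem_range] at hi
      exact hne (by omega)
    · intro h; simp at h
  mul_assoc f g h := by
    funext w
    rw [mul_apply, mul_apply]
    have L1 : ∀ j ∈ Finset.range (w.length + 1), (f * g) (w.take j) * h (w.drop j)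
        = ∑ i ∈ Finset.range (j + 1),
            f (w.take i) * (g ((w.drop i).take (j - i)) * h (w.drop j)) := by
      intro j hj
      simp only [Finset.mem_range] at hj
      rw [mul_apply, List.length_take, min_eq_left (by omega), Finset.sum_mul]
      refine Finset.sum_congr rfl fun i hi => ?_
      simp only [Finset.mem_range] at hi
      rw [List.take_take, min_eq_left (by omega), List.drop_take, mul_assoc]
    have R1 : ∀ i ∈ Finset.range (w.length + 1), f (w.take i) * (g * h) (w.drop i)
        = ∑ j ∈ Finset.Ico i (w.length + 1),
            f (w.take i) * (g ((w.drop i).take (j - i)) * h (w.drop j)) := by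
      intro i hi
      simp only [Finset.mem_range] at hi
      rw [mul_apply, List.length_drop, Finset.mul_sum, Finset.sum_Ico_eq_sum_range]
      have hni : w.length + 1 - i = w.length - i + 1 := by omega
      rw [hni]
      refine Finset.sum_congr rfl fun l hl => ?_
      simp only [Finset.mem_range] at hl
      have h1 : i + l - i = l := by omega
      rw [h1, List.drop_drop]
    rw [Finset.sum_congr rfl L1, Finset.sum_congr rfl R1]
    simp only [Finset.range_eq_Ico]
    first
      | exact Finset.sum_Ico_Ico_comm ..
      | rw [← Finset.sum_Ico_Ico_comm]

end NCS

/-- The variable `X` in `ℂ⟪X,Y⟫`. -/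
noncomputable def Xv : NCS := fun w => if w = [0] then 1 else 0

/-- The variable `Y` in `ℂ⟪X,Y⟫`. -/
noncomputable def Yv : NCS := fun w => if w = [1] then 1 else 0

/-- A word in `{X = 0, Y = 1}` is an irreducible bracketing: it is nonempty, balanced
(as many `X`'s as `Y`'s), and every proper nonempty prefix has strictly more `X`'s
than `Y`'s. -/
def Irred (w : List (Fin 2)) : Prop :=
  w ≠ [] ∧ w.count 0 = w.count 1 ∧
    ∀ i, 0 < i → i < w.length → (w.take i).count 1 < (w.take i).count 0

open scoped Classical

/-- Dyck words: balanced with all prefixes having at least as many 0's as 1's. -/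
def Dyck (w : List (Fin 2)) : Prop :=
  w.count 0 = w.count 1 ∧ ∀ i, (w.take i).count 1 ≤ (w.take i).count 0

noncomputable def D₀ : NCS := fun w => if Dyck w then 1 else 0
noncomputable def C₀ : NCS := fun w => if Irred w then 1 else 0

lemma ncs_sub_apply (f g : NCS) (w : List (Fin 2)) : (f - g) w = f w - g w := rfl

lemma count_take_add_drop (a : Fin 2) (w : List (Fin 2)) (i : ℕ) :
    (w.take i).count a + (w.drop i).count a = w.count a := by
  rw [← List.count_append, List.take_append_drop]

lemma dyck_nil : Dyck [] := ⟨rfl, fun i => by simp⟩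

lemma not_irred_nil : ¬ Irred [] := fun h => h.1 rfl

lemma C₀_nil : C₀ [] = 0 := by simp [C₀, not_irred_nil]

lemma D₀_nil : D₀ [] = 1 := by simp [D₀, dyck_nil]

lemma Irred.dyck {w : List (Fin 2)} (h : Irred w) : Dyck w := by
  refine ⟨h.2.1, fun i => ?_⟩
  rcases Nat.lt_or_ge i w.length with hi | hi
  · rcases Nat.eq_zero_or_pos i with rfl | hpos
    · simp
    · exact (h.2.2 i hpos hi).le
  · rw [List.take_of_length_le hi]
    exact h.2.1.ge

lemma Dyck.append {u v : List (Fin 2)} (hu : Dyck u) (hv : Dyck v) : Dyck (u ++ v) := by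
  constructor
  · simp only [List.count_append]
    have h1 := hu.1; have h2 := hv.1; omega
  · intro i
    rw [List.take_append]
    simp only [List.count_append]
    exact Nat.add_le_add (hu.2 i) (hv.2 _)

/-- Left factorization: for nonempty `w`, `(C₀ * D₀) w = D₀ w`. -/
lemma sum_CD (w : List (Fin 2)) (hw : w ≠ []) :
    ∑ i ∈ Finset.range (w.length + 1), C₀ (w.take i) * D₀ (w.drop i) = D₀ w := by
  by_cases hD : Dyck w
  · have hex : ∃ i, 0 < i ∧ i ≤ w.length ∧ (w.take i).count 0 = (w.take i).count 1 :=
      ⟨w.length, List.length_pos_iff.mpr hw, le_refl _, by rw [List.take_of_length_le (le_refl _)]; exact hD.1⟩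
    obtain ⟨hk0, hkle, hkbal⟩ := Nat.find_spec hex
    set k := Nat.find hex with hkdef
    have hIrr : Irred (w.take k) := by
      refine ⟨?_, hkbal, ?_⟩
      · intro h
        have := congrArg List.length h
        simp only [List.length_take, List.length_nil] at this
        omega
      · intro i hi hilt
        rw [List.length_take] at hilt
        have hik : i < k := lt_of_lt_of_le hilt (min_le_left _ _)
        rw [List.take_take, min_eq_left hik.le]
        have hle := hD.2 i
        rcases lt_or_eq_of_le hle with h | h
        · exact h
        · exact absurd ⟨hi, by omega, h.symm⟩ (Nat.find_min hex hik)
    have hDy : Dyck (w.drop k) := by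
      constructor
      · have h0 := count_take_add_drop 0 w k
        have h1 := count_take_add_drop 1 w k
        have := hD.1
        omega
      · intro i
        have hsplit : w.take (k + i) = w.take k ++ (w.drop k).take i := List.take_add
        have := hD.2 (k + i)
        rw [hsplit, List.count_append, List.count_append] at this
        omega
    rw [Finset.sum_eq_single k]
    · simp only [C₀, D₀, if_pos hIrr, if_pos hDy, if_pos hD, one_mul]
    · intro j hj hjk
      simp only [Finset.mem_range] at hj
      by_cases hI : Irred (w.take j)
      · by_cases hDj : Dyck (w.drop j)
        · exfalso
          have hj0 : 0 < j := by
            rcases Nat.eq_zero_or_pos j with rfl | h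
            · exact (hI.1 rfl).elim
            · exact h
          have hkj : k ≤ j := Nat.find_min' hex ⟨hj0, by omega, hI.2.1⟩
          have hlt : k < j := lt_of_le_of_ne hkj (Ne.symm hjk)
          have := hI.2.2 k hk0 (by rw [List.length_take]; omega)
          rw [List.take_take, min_eq_left hkj] at this
          omega
        · simp [D₀, hDj]
      · simp [C₀, hI]
    · intro h
      exact absurd (Finset.mem_range.mpr (by omega)) h
  · rw [Finset.sum_eq_zero, eq_comm]
    · simp [D₀, hD]
    · intro j hj
      by_cases hI : Irred (w.take j)
      · by_cases hDj : Dyck (w.drop j)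
        · exfalso
          have := Dyck.append hI.dyck hDj
          rw [List.take_append_drop] at this
          exact hD this
        · simp [D₀, hDj]
      · simp [C₀, hI]

/-- Right factorization: for nonempty `w`, `(D₀ * C₀) w = D₀ w`. -/
lemma sum_DC (w : List (Fin 2)) (hw : w ≠ []) :
    ∑ i ∈ Finset.range (w.length + 1), D₀ (w.take i) * C₀ (w.drop i) = D₀ w := by
  by_cases hD : Dyck w
  · set k := Nat.findGreatest
      (fun i => (w.take i).count 0 = (w.take i).count 1) (w.length - 1) with hkdef
    have hkbal : (w.take k).count 0 = (w.take k).count 1 :=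
      Nat.findGreatest_spec (P := fun i => (w.take i).count 0 = (w.take i).count 1)
        (Nat.zero_le _) (by simp)
    have hkle : k ≤ w.length - 1 := Nat.findGreatest_le _
    have hwlen : 0 < w.length := List.length_pos_iff.mpr hw
    have hgr : ∀ m, k < m → m ≤ w.length - 1 →
        ¬ (w.take m).count 0 = (w.take m).count 1 := fun m h1 h2 =>
      Nat.findGreatest_is_greatest
        (P := fun i => (w.take i).count 0 = (w.take i).count 1) h1 h2
    have hDy : Dyck (w.take k) := by
      refine ⟨hkbal, fun i => ?_⟩
      rw [List.take_take]
      exact hD.2 _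
    have hIrr : Irred (w.drop k) := by
      refine ⟨?_, ?_, ?_⟩
      · intro h
        have := congrArg List.length h
        simp only [List.length_drop, List.length_nil] at this
        omega
      · have h0 := count_take_add_drop 0 w k
        have h1 := count_take_add_drop 1 w k
        have := hD.1
        omega
      · intro i hi hilt
        rw [List.length_drop] at hilt
        have hsplit : w.take (k + i) = w.take k ++ (w.drop k).take i := List.take_add
        have hle := hD.2 (k + i)
        rw [hsplit, List.count_append, List.count_append] at hle
        by_contra hcon
        push_neg at hcon
        refine hgr (k + i) (by omega) (by omega) ?_
        rw [hsplit, List.count_append, List.count_append]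
        omega
    rw [Finset.sum_eq_single k]
    · simp only [C₀, D₀, if_pos hIrr, if_pos hDy, if_pos hD, one_mul]
    · intro j hj hjk
      simp only [Finset.mem_range] at hj
      by_cases hDj : Dyck (w.take j)
      · by_cases hI : Irred (w.drop j)
        · exfalso
          have hjlt : j < w.length := by
            by_contra h
            exact hI.1 (List.drop_eq_nil_iff.mpr (by omega))
          have hjk' : j ≤ k := by
            by_contra h
            exact hgr j (by omega) (by omega) hDj.1
          have hlt : j < k := lt_of_le_of_ne hjk' hjk
          have hsplit : w.take k = w.take j ++ (w.drop j).take (k - j) := by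
            have h : w.take (j + (k - j)) = w.take j ++ (w.drop j).take (k - j) := List.take_add
            rwa [show j + (k - j) = k by omega] at h
          have hbal := hkbal
          rw [hsplit, List.count_append, List.count_append] at hbal
          have := hI.2.2 (k - j) (by omega) (by rw [List.length_drop]; omega)
          have hbj := hDj.1
          omega
        · simp [C₀, hI]
      · simp [D₀, hDj]
    · intro h
      exact absurd (Finset.mem_range.mpr (by omega)) h
  · rw [Finset.sum_eq_zero, eq_comm]
    · simp [D₀, hD]
    · intro j hj
      by_cases hDj : Dyck (w.take j)
      · by_cases hI : Irred (w.drop j)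
        · exfalso
          have := Dyck.append hDj hI.dyck
          rw [List.take_append_drop] at this
          exact hD this
        · simp [C₀, hI]
      · simp [D₀, hDj]
lemma Xv_mul (f : NCS) (w : List (Fin 2)) :
    (Xv * f) w = if w.head? = some 0 then f w.tail else 0 := by
  rw [NCS.mul_apply, Finset.sum_eq_single 1]
  · cases w with
    | nil => simp [Xv]
    | cons a t =>
      simp only [List.take_cons, List.take_zero, List.drop_succ_cons, List.drop_zero,
        List.head?_cons, List.tail_cons]
      by_cases ha : a = 0
      · subst ha; simp [Xv]
      · have : ¬ ([a] = [0]) := by simpa using ha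
        simp [Xv, this, ha]
  · intro i hi hne
    simp only [Finset.mem_range] at hi
    have : ¬ (w.take i = [0]) := by
      intro h
      have := congrArg List.length h
      simp only [List.length_take, List.length_singleton] at this
      omega
    simp [Xv, this]
  · intro h
    simp only [Finset.mem_range, not_lt] at h
    have hw : w = [] := List.eq_nil_of_length_eq_zero (by omega)
    subst hw
    simp [Xv]

lemma mul_Yv (f : NCS) (w : List (Fin 2)) :
    (f * Yv) w = if w.getLast? = some 1 then f w.dropLast else 0 := by
  rcases List.eq_nil_or_concat w with rfl | ⟨u, a, rfl⟩
  · rw [NCS.mul_apply]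
    simp [Yv]
  · rw [List.concat_eq_append, NCS.mul_apply, Finset.sum_eq_single u.length]
    · have ht : (u ++ [a]).take u.length = u := by
        rw [List.take_append, List.take_of_length_le (le_refl _)]
        simp
      have hd : (u ++ [a]).drop u.length = [a] := by
        rw [List.drop_append, List.drop_of_length_le (le_refl _)]
        simp
      rw [ht, hd, List.getLast?_concat, List.dropLast_concat]
      by_cases ha : a = 1
      · subst ha; simp [Yv]
      · have h1 : ¬ ([a] = [1]) := by simpa using ha
        have h2 : ¬ (some a = some 1) := by simpa using ha
        simp [Yv, h1, h2]
    · intro i hi hne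
      simp only [Finset.mem_range, List.length_append, List.length_singleton] at hi
      have : ¬ ((u ++ [a]).drop i = [1]) := by
        intro h
        have := congrArg List.length h
        simp only [List.length_drop, List.length_append, List.length_singleton] at this
        omega
      simp [Yv, this]
    · intro h
      exact absurd (Finset.mem_range.mpr (by simp)) h

lemma XDY_apply (f : NCS) (w : List (Fin 2)) :
    (Xv * f * Yv) w =
      if w.getLast? = some 1 then
        (if w.dropLast.head? = some 0 then f w.dropLast.tail else 0)
      else 0 := by
  rw [mul_Yv, Xv_mul]

lemma cnt00 (t : List (Fin 2)) : (0 :: t).count 0 = t.count 0 + 1 := by simp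
lemma cnt01 (t : List (Fin 2)) : (0 :: t).count 1 = t.count 1 := by simp
lemma cnt10 (t : List (Fin 2)) : (1 :: t).count 0 = t.count 0 := by simp
lemma cnt11 (t : List (Fin 2)) : (1 :: t).count 1 = t.count 1 + 1 := by simp
lemma cnta0 (t : List (Fin 2)) : (t ++ [0]).count 0 = t.count 0 + 1 := by simp
lemma cnta1 (t : List (Fin 2)) : (t ++ [0]).count 1 = t.count 1 := by simp
lemma cntb0 (t : List (Fin 2)) : (t ++ [1]).count 0 = t.count 0 := by simp
lemma cntb1 (t : List (Fin 2)) : (t ++ [1]).count 1 = t.count 1 + 1 := by simp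

lemma take_succ_cons' (a : Fin 2) (v : List (Fin 2)) (j : ℕ) :
    List.take (j + 1) (a :: v) = a :: v.take j := rfl

lemma take_app_one (u : List (Fin 2)) (j : ℕ) (hj : j ≤ u.length) :
    (u ++ [1]).take j = u.take j := by
  rw [List.take_append, show j - u.length = 0 by omega]
  simp

lemma irred_zero_dyck_one {u : List (Fin 2)} (hu : Dyck u) : Irred (0 :: u ++ [1]) := by
  refine ⟨by simp, ?_, ?_⟩
  · rw [show (0 :: u ++ [1] : List (Fin 2)) = 0 :: (u ++ [1]) from rfl,
      cnt00, cnt01, cntb0, cntb1]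
    have := hu.1
    omega
  · intro i hi hilt
    rw [show ((0 :: u ++ [1] : List (Fin 2))).length = u.length + 2 by simp] at hilt
    obtain ⟨j, rfl⟩ : ∃ j, i = j + 1 := ⟨i - 1, by omega⟩
    rw [show (0 :: u ++ [1] : List (Fin 2)) = 0 :: (u ++ [1]) from rfl,
      take_succ_cons', take_app_one u j (by omega), cnt00, cnt01]
    have := hu.2 j
    omega

lemma dyck_of_irred_zero_one {u : List (Fin 2)} (h : Irred (0 :: u ++ [1])) : Dyck u := by
  have hbal : u.count 0 = u.count 1 := by
    have h1 := h.2.1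
    rw [show (0 :: u ++ [1] : List (Fin 2)) = 0 :: (u ++ [1]) from rfl,
      cnt00, cnt01, cntb0, cntb1] at h1
    omega
  refine ⟨hbal, fun i => ?_⟩
  rcases Nat.lt_or_ge i u.length with hi | hi
  · have h2 := h.2.2 (i + 1) (by omega) (by simp; omega)
    rw [show (0 :: u ++ [1] : List (Fin 2)) = 0 :: (u ++ [1]) from rfl,
      take_succ_cons', take_app_one u i (by omega), cnt00, cnt01] at h2
    omega
  · rw [List.take_of_length_le hi]
    exact hbal.ge

lemma not_irred_one_cons (t : List (Fin 2)) : ¬ Irred (1 :: t) := by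
  intro h
  rcases List.eq_nil_or_concat t with rfl | ⟨u, a, rfl⟩
  · have h1 := h.2.1
    rw [cnt10, cnt11] at h1
    simp at h1
  · have h2 := h.2.2 1 (by omega) (by simp)
    have key : ∀ l : List (Fin 2), List.take 1 ((1:Fin 2) :: l) = [1] := fun l => rfl
    rw [key] at h2
    simp at h2

lemma not_irred_concat_zero (t : List (Fin 2)) : ¬ Irred (t ++ [0]) := by
  intro h
  have hlen : 0 < t.length := by
    rcases t with _ | ⟨a, t⟩
    · have h1 := h.2.1
      simp at h1
    · simp
  have hbal := h.2.1
  rw [cnta0, cnta1] at hbal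
  have hpre := h.2.2 t.length (by omega) (by simp)
  have ht : (t ++ [0]).take t.length = t := by
    rw [List.take_append, List.take_of_length_le (le_refl _)]
    simp
  rw [ht] at hpre
  omega
lemma fin2 (a : Fin 2) : a = 0 ∨ a = 1 := by
  fin_cases a
  · exact Or.inl rfl
  · exact Or.inr rfl

lemma C₀_eq_XDY (w : List (Fin 2)) : C₀ w = (Xv * D₀ * Yv) w := by
  rw [XDY_apply]
  rcases List.eq_nil_or_concat w with rfl | ⟨u, b, rfl⟩
  · simp [C₀, not_irred_nil]
  · rw [List.concat_eq_append, List.getLast?_concat, List.dropLast_concat]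
    rcases u with _ | ⟨a, t⟩
    · have hni : ¬ Irred [b] := by
        intro hI
        have hb := hI.2.1
        rcases fin2 b with rfl | rfl <;> simp at hb
      simp [C₀, hni]
    · simp only [List.head?_cons, List.tail_cons]
      rcases fin2 a with rfl | rfl <;> rcases fin2 b with rfl | rfl
      · -- a = 0, b = 0
        rw [if_neg (by simp), C₀, if_neg (not_irred_concat_zero _)]
      · -- a = 0, b = 1
        simp only [if_pos (rfl : some (0 : Fin 2) = some 0), ↓reduceIte]
        exact if_congr ⟨fun h => dyck_of_irred_zero_one h, fun h => irred_zero_dyck_one h⟩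
          rfl rfl
      · -- a = 1, b = 0
        rw [if_neg (by simp), C₀]
        exact if_neg (not_irred_one_cons _)
      · -- a = 1, b = 1
        simp only [if_neg (show ¬ (some (1 : Fin 2) = some 0) by simp), C₀]
        exact if_neg (not_irred_one_cons _)

lemma left_inv : (1 - C₀) * D₀ = 1 := by
  funext w
  rw [sub_mul, one_mul, ncs_sub_apply, NCS.mul_apply, NCS.one_apply]
  rcases eq_or_ne w [] with rfl | hw
  · simp [C₀_nil, D₀_nil]
  · rw [sum_CD w hw, if_neg hw, sub_self]

lemma right_inv : D₀ * (1 - C₀) = 1 := by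
  funext w
  rw [mul_sub, mul_one, ncs_sub_apply, NCS.mul_apply, NCS.one_apply]
  rcases eq_or_ne w [] with rfl | hw
  · simp [C₀_nil, D₀_nil]
  · rw [sum_DC w hw, if_neg hw, sub_self]

lemma main_char (C D : NCS) (h0 : C [] = 0) (h1 : (1 - C) * D = 1)
    (h3 : C = Xv * D * Yv) : ∀ w, C w = C₀ w ∧ D w = D₀ w := by
  have hD_nil : D [] = 1 := by
    have h := congrFun h1 []
    simp only [NCS.mul_apply, List.length_nil, zero_add, Finset.sum_range_one,
      List.take_nil, List.drop_nil, ncs_sub_apply, NCS.one_apply, h0] at h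
    simpa using h
  have hrec : ∀ w : List (Fin 2), w ≠ [] →
      D w = ∑ i ∈ Finset.range (w.length + 1), C (w.take i) * D (w.drop i) := by
    intro w hw
    have h := congrFun h1 w
    rw [sub_mul, one_mul, ncs_sub_apply, NCS.mul_apply, NCS.one_apply, if_neg hw] at h
    exact sub_eq_zero.mp h
  have key : ∀ n, ∀ w : List (Fin 2), w.length = n → C w = C₀ w ∧ D w = D₀ w := by
    intro n
    induction n using Nat.strong_induction_on with
    | _ n ih =>
      intro w hw
      have hCw : C w = C₀ w := by
        rw [congrFun h3 w, C₀_eq_XDY w, XDY_apply, XDY_apply]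
        rcases eq_or_ne (w.getLast?) (some 1) with hg | hg
        · rw [if_pos hg, if_pos hg]
          rcases eq_or_ne (w.dropLast.head?) (some 0) with hh | hh
          · rw [if_pos hh, if_pos hh]
            have hwne : w ≠ [] := by
              intro hn; subst hn; simp at hg
            have hlen : (w.dropLast.tail).length < n := by
              rw [List.length_tail, List.length_dropLast]
              have : 0 < w.length := List.length_pos_iff.mpr hwne
              omega
            exact (ih _ hlen _ rfl).2
          · rw [if_neg hh, if_neg hh]
        · rw [if_neg hg, if_neg hg]
      refine ⟨hCw, ?_⟩
      rcases eq_or_ne w [] with rfl | hwne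
      · rw [hD_nil, D₀_nil]
      · rw [hrec w hwne, ← sum_CD w hwne]
        refine Finset.sum_congr rfl fun i hi => ?_
        simp only [Finset.mem_range] at hi
        rcases Nat.eq_zero_or_pos i with rfl | hipos
        · simp only [List.take_zero]
          rw [h0, C₀_nil, zero_mul, zero_mul]
        · have hC' : C (w.take i) = C₀ (w.take i) := by
            rcases Nat.lt_or_ge i w.length with h | h
            · exact (ih (w.take i).length (by rw [List.length_take]; omega) _ rfl).1
            · rw [List.take_of_length_le h]; exact hCw
          have hD' : D (w.drop i) = D₀ (w.drop i) := by
            have hl : (w.drop i).length < n := by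
              rw [List.length_drop]
              have := List.length_pos_iff.mpr hwne
              omega
            exact (ih _ hl _ rfl).2
          rw [hC', hD']
  exact fun w => key w.length w rfl
open scoped Classical in
/-- In `ℂ⟪X,Y⟫` there is a unique element `C` with zero constant term satisfying
`C = X·(1-C)⁻¹·Y`, and its coefficients are: `1` on nonempty irreducible balanced
(Dyck) words and `0` elsewhere, i.e. `C = XY + XXYY + XXYXYY + XXXYYY + ⋯`. -/
theorem exists_unique_irreducible_bracketing_series :
    (∃! C : NCS, C [] = 0 ∧
        ∃ D : NCS, (1 - C) * D = 1 ∧ D * (1 - C) = 1 ∧ C = Xv * D * Yv) ∧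
    ∀ C : NCS, (C [] = 0 ∧
        ∃ D : NCS, (1 - C) * D = 1 ∧ D * (1 - C) = 1 ∧ C = Xv * D * Yv) →
      ∀ w, C w = if Irred w then 1 else 0 := by
  constructor
  · refine ⟨C₀, ⟨C₀_nil, D₀, left_inv, right_inv, funext C₀_eq_XDY⟩, ?_⟩
    rintro C ⟨hc0, D, hh1, hh2, hh3⟩
    funext w
    exact (main_char C D hc0 hh1 hh3 w).1
  · rintro C ⟨hc0, D, hh1, hh2, hh3⟩ w
    rw [(main_char C D hc0 hh1 hh3 w).1]
    rfl
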